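/- (Main theorem, 3D.) Let D = {x ∈ ℝ³ : x₃ > 0}. Let u : ℝ³ × [0,∞) → ℝ³ be C³ in space up to the boundary and C¹ in time up to the boundary, divergence-free, satisfying the no-slip condition u(x,t) = 0 for x₃ = 0, and suppose the vorticity ω = ∇∧u satisfies ∂ω/∂t + (u·∇)ω − νΔω − (ω·∇)u − G = 0 in the closed half space. Let θ(x₁,x₂,t) = ω(x₁,x₂,0,t) and ψ(x₁,x₂,t) = G(x₁,x₂,0,t). Then θ³ = 0, and on ∂D = ℝ²: ∂θ¹/∂t − 2ν Δ_Γ θ¹ + ν ∂/∂x₁(∇^Γ·θ) − ν (∂³u²/∂𝛎³)|_{∂D} − ψ¹ = 0 and ∂θ²/∂t − 2ν Δ_Γ θ² + ν ∂/∂x₂(∇^Γ·θ) + ν (∂³u¹/∂𝛎³)|_{∂D} − ψ² = 0, where ∂/∂𝛎 = −∂/∂x₃ is the outward normal derivative. In particular the effective viscosity in the boundary dynamics is 2ν, i.e. doubled. -/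

import Mathlib

/-- Partial derivative of a scalar field on `ℝⁿ` in the `i`-th coordinate direction. -/
noncomputable def pd {n : ℕ} (i : Fin n) (f : (Fin n → ℝ) → ℝ) (x : Fin n → ℝ) : ℝ :=
  fderiv ℝ f x (Pi.single i 1)

/-- The curl (vorticity) `ω = ∇ ∧ u` of a vector field on `ℝ³`. -/
noncomputable def curl3 (u : (Fin 3 → ℝ) → Fin 3 → ℝ) (x : Fin 3 → ℝ) : Fin 3 → ℝ :=
  ![pd 1 (fun y => u y 2) x - pd 2 (fun y => u y 1) x,
    pd 2 (fun y => u y 0) x - pd 0 (fun y => u y 2) x,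
    pd 0 (fun y => u y 1) x - pd 1 (fun y => u y 0) x]

/-- The boundary vorticity `θ(x₁,x₂,t) = ω(x₁,x₂,0,t)` as a time-dependent field on
`∂D = ℝ²`. -/
noncomputable def bdryVort (u : (Fin 3 → ℝ) → ℝ → Fin 3 → ℝ) (p : Fin 2 → ℝ) (t : ℝ) :
    Fin 3 → ℝ :=
  curl3 (fun y => u y t) ![p 0, p 1, 0]

namespace BVD


lemma contDiff_pd {d : ℕ} {n m : WithTop ℕ∞} {f : (Fin d → ℝ) → ℝ}
    (hf : ContDiff ℝ n f) (h : m + 1 ≤ n) (i : Fin d) : ContDiff ℝ m (pd i f) :=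
  (hf.fderiv_right h).clm_apply contDiff_const

lemma pd_add {d : ℕ} {f g : (Fin d → ℝ) → ℝ} {x : Fin d → ℝ}
    (hf : DifferentiableAt ℝ f x) (hg : DifferentiableAt ℝ g x) (i : Fin d) :
    pd i (fun y => f y + g y) x = pd i f x + pd i g x := by
  simp [pd, fderiv_fun_add hf hg]

lemma pd_sub {d : ℕ} {f g : (Fin d → ℝ) → ℝ} {x : Fin d → ℝ}
    (hf : DifferentiableAt ℝ f x) (hg : DifferentiableAt ℝ g x) (i : Fin d) :
    pd i (fun y => f y - g y) x = pd i f x - pd i g x := by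
  simp [pd, fderiv_fun_sub hf hg]

lemma pd_eq_zero_of_vanish {f : (Fin 3 → ℝ) → ℝ} {x : Fin 3 → ℝ}
    (hf : DifferentiableAt ℝ f x) (hx : x 2 = 0)
    (h0 : ∀ y : Fin 3 → ℝ, y 2 = 0 → f y = 0) {i : Fin 3} (hi : i ≠ 2) :
    pd i f x = 0 := by
  set w : Fin 3 → ℝ := Pi.single i 1 with hwdef
  have hw : w 2 = 0 := by simp [hwdef, Pi.single_eq_of_ne (Ne.symm hi)]
  have hc : HasDerivAt (fun s : ℝ => x + s • w) w 0 := by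
    simpa using ((hasDerivAt_id (0:ℝ)).smul_const w).const_add x
  have hfx : HasFDerivAt f (fderiv ℝ f x) ((fun s : ℝ => x + s • w) 0) := by
    simpa using hf.hasFDerivAt
  have h1 : HasDerivAt (fun s : ℝ => f (x + s • w)) (fderiv ℝ f x w) 0 :=
    hfx.comp_hasDerivAt (0:ℝ) hc
  have h2 : (fun s : ℝ => f (x + s • w)) = fun _ => (0:ℝ) := by
    funext s
    exact h0 _ (by simp [hx, hw])
  rw [h2] at h1
  have := h1.unique (hasDerivAt_const 0 0)
  simpa [pd, hwdef] using this

lemma eq_zero_on_bdry_of_continuous {f : (Fin 3 → ℝ) → ℝ} (hf : Continuous f)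
    (h0 : ∀ y : Fin 3 → ℝ, 0 < y 2 → f y = 0) {x : Fin 3 → ℝ} (hx : x 2 = 0) : f x = 0 := by
  set w : Fin 3 → ℝ := Pi.single 2 1 with hwdef
  have hw : w 2 = 1 := by simp [hwdef]
  have hcont : Continuous (fun s : ℝ => x + s • w) := by continuity
  have hT : Filter.Tendsto (fun s : ℝ => x + s • w) (nhdsWithin 0 (Set.Ioi 0)) (nhds x) := by
    have h := hcont.tendsto 0
    simp only [zero_smul, add_zero] at h
    exact h.mono_left nhdsWithin_le_nhds
  have h2 : Filter.Tendsto (fun s : ℝ => f (x + s • w))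
      (nhdsWithin 0 (Set.Ioi 0)) (nhds (f x)) := (hf.tendsto x).comp hT
  have h3 : Filter.Tendsto (fun s : ℝ => f (x + s • w))
      (nhdsWithin 0 (Set.Ioi 0)) (nhds 0) := by
    apply Filter.Tendsto.congr' _ tendsto_const_nhds
    filter_upwards [self_mem_nhdsWithin] with s hs
    exact (h0 _ (by simp [hx, hw]; exact hs)).symm
  exact tendsto_nhds_unique h2 h3

lemma pd_comm {f : (Fin 3 → ℝ) → ℝ} (hf : ContDiff ℝ 2 f) (i j : Fin 3) (x : Fin 3 → ℝ) :
    pd i (pd j f) x = pd j (pd i f) x := by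
  have hd : ∀ y, HasFDerivAt f (fderiv ℝ f y) y := fun y =>
    (hf.differentiable two_ne_zero y).hasFDerivAt
  have h1 : ContDiff ℝ 1 (fderiv ℝ f) := hf.fderiv_right (by norm_num)
  have h2 : HasFDerivAt (fderiv ℝ f) (fderiv ℝ (fderiv ℝ f) x) x :=
    ((h1.differentiable one_ne_zero) x).hasFDerivAt
  have key : ∀ a b : Fin 3,
      pd a (pd b f) x = fderiv ℝ (fderiv ℝ f) x (Pi.single a 1) (Pi.single b 1) := by
    intro a b
    have hb : pd b f = fun y => (fderiv ℝ f y) (Pi.single b (1:ℝ)) := by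
      funext y; rfl
    rw [pd, hb, fderiv_clm_apply ((h1.differentiable one_ne_zero) x) (differentiableAt_const _)]
    simp
  rw [key i j, key j i]
  exact (second_derivative_symmetric hd h2 (Pi.single j 1) (Pi.single i 1)).symm

lemma pd_pd_sub {f g : (Fin 3 → ℝ) → ℝ}
    (hf : ContDiff ℝ 2 f) (hg : ContDiff ℝ 2 g) (a b : Fin 3) (x : Fin 3 → ℝ) :
    pd a (pd b (fun y => f y - g y)) x = pd a (pd b f) x - pd a (pd b g) x := by
  have h1 : pd b (fun y => f y - g y) = fun y => pd b f y - pd b g y :=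
    funext fun y => pd_sub (hf.differentiable two_ne_zero y) (hg.differentiable two_ne_zero y) b
  rw [h1]
  exact pd_sub ((contDiff_pd hf (by norm_num) b).differentiable one_ne_zero x)
    ((contDiff_pd hg (by norm_num) b).differentiable one_ne_zero x) a

lemma key_identity (v : (Fin 3 → ℝ) → Fin 3 → ℝ) (hv : ContDiff ℝ 3 v)
    (hdv : ∀ y : Fin 3 → ℝ, 0 ≤ y 2 →
      pd 0 (fun z => v z 0) y + pd 1 (fun z => v z 1) y + pd 2 (fun z => v z 2) y = 0)
    (hns : ∀ y : Fin 3 → ℝ, y 2 = 0 → v y = 0)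
    {x : Fin 3 → ℝ} (hx : x 2 = 0) :
    (pd 2 (pd 2 (fun y => curl3 v y 0)) x
      = pd 1 (pd 1 (fun y => curl3 v y 0)) x - pd 0 (pd 1 (fun y => curl3 v y 1)) x
        - pd 2 (pd 2 (pd 2 (fun z => v z 1))) x)
    ∧ (pd 2 (pd 2 (fun y => curl3 v y 1)) x
      = pd 0 (pd 0 (fun y => curl3 v y 1)) x - pd 1 (pd 0 (fun y => curl3 v y 0)) x
        + pd 2 (pd 2 (pd 2 (fun z => v z 0))) x) := by
  have hvj : ∀ j : Fin 3, ContDiff ℝ 3 (fun z => v z j) := fun j =>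
    (ContinuousLinearMap.proj j : (Fin 3 → ℝ) →L[ℝ] ℝ).contDiff.comp hv
  have c2pd : ∀ j i : Fin 3, ContDiff ℝ 2 (pd i (fun z => v z j)) := fun j i =>
    contDiff_pd (hvj j) (by norm_num) i
  have c1pd : ∀ j i i' : Fin 3, ContDiff ℝ 1 (pd i' (pd i (fun z => v z j))) := fun j i i' =>
    contDiff_pd (c2pd j i) (by norm_num) i'
  have hA : ∀ (j i : Fin 3), i ≠ 2 → ∀ y : Fin 3 → ℝ, y 2 = 0 →
      pd i (fun z => v z j) y = 0 := fun j i hi y hy =>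
    pd_eq_zero_of_vanish ((hvj j).differentiable (by norm_num) y) hy
      (fun z hz => by simp [hns z hz]) hi
  have hB : ∀ (j i1 i2 : Fin 3), i1 ≠ 2 → i2 ≠ 2 → ∀ y : Fin 3 → ℝ, y 2 = 0 →
      pd i1 (pd i2 (fun z => v z j)) y = 0 := fun j i1 i2 h1 h2 y hy =>
    pd_eq_zero_of_vanish ((c2pd j i2).differentiable two_ne_zero y) hy
      (fun z hz => hA j i2 h2 z hz) h1
  have hC : ∀ (j i1 i2 i3 : Fin 3), i1 ≠ 2 → i2 ≠ 2 → i3 ≠ 2 → ∀ y : Fin 3 → ℝ, y 2 = 0 →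
      pd i1 (pd i2 (pd i3 (fun z => v z j))) y = 0 := fun j i1 i2 i3 h1 h2 h3 y hy =>
    pd_eq_zero_of_vanish ((c1pd j i3 i2).differentiable one_ne_zero y) hy
      (fun z hz => hB j i2 i3 h2 h3 z hz) h1
  -- divergence facts
  set dv : (Fin 3 → ℝ) → ℝ :=
    fun y => pd 0 (fun z => v z 0) y + pd 1 (fun z => v z 1) y + pd 2 (fun z => v z 2) y
    with hdvdef
  have hdc : ContDiff ℝ 2 dv := ((c2pd 0 0).add (c2pd 1 1)).add (c2pd 2 2)
  have hopen : ∀ y : Fin 3 → ℝ, 0 < y 2 → pd 2 dv y = 0 := by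
    intro y hy
    have hmem : {z : Fin 3 → ℝ | 0 < z 2} ∈ nhds y :=
      (isOpen_lt continuous_const (continuous_apply 2)).mem_nhds hy
    have hev : dv =ᶠ[nhds y] (fun _ => (0:ℝ)) := by
      filter_upwards [hmem] with z hz
      exact hdv z hz.le
    have heq : fderiv ℝ dv y = fderiv ℝ (fun _ => (0:ℝ)) y := hev.fderiv_eq
    simp [pd, heq]
  have hbdry : ∀ y : Fin 3 → ℝ, y 2 = 0 → pd 2 dv y = 0 := fun y hy =>
    eq_zero_on_bdry_of_continuous ((contDiff_pd (m := 1) hdc (by norm_num) 2).continuous) hopen hy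
  have htang : ∀ i : Fin 3, i ≠ 2 → pd i (pd 2 dv) x = 0 := fun i hi =>
    pd_eq_zero_of_vanish
      (((contDiff_pd hdc (by norm_num) 2 : ContDiff ℝ 1 (pd 2 dv)).differentiable one_ne_zero) x)
      hx hbdry hi
  -- Clairaut
  have comm2 : ∀ (j a b : Fin 3),
      pd a (pd b (fun z => v z j)) = pd b (pd a (fun z => v z j)) := fun j a b =>
    funext fun y => pd_comm ((hvj j).of_le (by norm_num)) a b y
  have comm3 : ∀ (j c a b : Fin 3) (y : Fin 3 → ℝ),
      pd a (pd b (pd c (fun z => v z j))) y = pd b (pd a (pd c (fun z => v z j))) y :=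
    fun j c a b y => pd_comm (c2pd j c) a b y
  -- curl components
  have hw0 : (fun y => curl3 v y 0)
      = fun y => pd 1 (fun z => v z 2) y - pd 2 (fun z => v z 1) y := by
    funext y; simp [curl3]
  have hw1 : (fun y => curl3 v y 1)
      = fun y => pd 2 (fun z => v z 0) y - pd 0 (fun z => v z 2) y := by
    funext y; simp [curl3]
  -- normal second derivative of v2 via divergence
  have s4 : pd 2 (fun z => v z 2) = fun y => dv y
      - (fun y' => pd 0 (fun z => v z 0) y' + pd 1 (fun z => v z 1) y') y := by
    funext y; rw [hdvdef]; ring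
  have s6a : ∀ a : Fin 3, pd a (pd 2 (pd 2 (fun z => v z 2))) x
      = pd a (pd 2 dv) x - pd a (pd 2 (pd 0 (fun z => v z 0))) x
        - pd a (pd 2 (pd 1 (fun z => v z 1))) x := by
    intro a
    have e1 : pd 2 (pd 2 (fun z => v z 2)) = fun y => pd 2 (pd 2 (fun z => v z 2)) y := rfl
    have e2 : pd 2 (pd 2 (fun z => v z 2))
        = fun y => pd 2 dv y - pd 2 (fun y' => pd 0 (fun z => v z 0) y'
            + pd 1 (fun z => v z 1) y') y := by
      funext y
      rw [s4]
      exact pd_sub (hdc.differentiable two_ne_zero y)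
        (((c2pd 0 0).differentiable two_ne_zero y).add ((c2pd 1 1).differentiable two_ne_zero y)) 2
    have e3 : pd 2 (fun y' => pd 0 (fun z => v z 0) y' + pd 1 (fun z => v z 1) y')
        = fun y => pd 2 (pd 0 (fun z => v z 0)) y + pd 2 (pd 1 (fun z => v z 1)) y := by
      funext y
      exact pd_add ((c2pd 0 0).differentiable two_ne_zero y)
        ((c2pd 1 1).differentiable two_ne_zero y) 2
    rw [e2]
    have hd1 : DifferentiableAt ℝ (pd 2 dv) x :=
      ((contDiff_pd hdc (by norm_num) 2 : ContDiff ℝ 1 (pd 2 dv)).differentiable one_ne_zero) x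
    have hd2 : DifferentiableAt ℝ
        (pd 2 (fun y' => pd 0 (fun z => v z 0) y' + pd 1 (fun z => v z 1) y')) x := by
      rw [e3]
      exact ((c1pd 0 0 2).differentiable one_ne_zero x).add ((c1pd 1 1 2).differentiable one_ne_zero x)
    rw [pd_sub hd1 hd2 a, e3,
      pd_add ((c1pd 0 0 2).differentiable one_ne_zero x) ((c1pd 1 1 2).differentiable one_ne_zero x) a]
    ring
  constructor
  · -- first component
    have s2 : pd 2 (pd 2 (fun y => curl3 v y 0)) x
        = pd 2 (pd 2 (pd 1 (fun z => v z 2))) x - pd 2 (pd 2 (pd 2 (fun z => v z 1))) x := by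
      rw [hw0]; exact pd_pd_sub (c2pd 2 1) (c2pd 1 2) 2 2 x
    have s3 : pd 2 (pd 2 (pd 1 (fun z => v z 2))) x
        = pd 1 (pd 2 (pd 2 (fun z => v z 2))) x := by
      rw [comm2 2 2 1]
      exact comm3 2 2 2 1 x
    have s6 := s6a 1
    have s7 : pd 1 (pd 2 dv) x = 0 := htang 1 (by decide)
    have s8 : pd 1 (pd 2 (pd 0 (fun z => v z 0))) x
        = pd 0 (pd 1 (pd 2 (fun z => v z 0))) x := by
      rw [comm2 0 2 0]
      exact comm3 0 2 1 0 x
    have s9 : pd 1 (pd 2 (pd 1 (fun z => v z 1))) x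
        = pd 1 (pd 1 (pd 2 (fun z => v z 1))) x := by
      rw [comm2 1 2 1]
    have r2 : pd 1 (pd 1 (fun y => curl3 v y 0)) x
        = pd 1 (pd 1 (pd 1 (fun z => v z 2))) x - pd 1 (pd 1 (pd 2 (fun z => v z 1))) x := by
      rw [hw0]; exact pd_pd_sub (c2pd 2 1) (c2pd 1 2) 1 1 x
    have r2z : pd 1 (pd 1 (pd 1 (fun z => v z 2))) x = 0 :=
      hC 2 1 1 1 (by decide) (by decide) (by decide) x hx
    have r3 : pd 0 (pd 1 (fun y => curl3 v y 1)) x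
        = pd 0 (pd 1 (pd 2 (fun z => v z 0))) x - pd 0 (pd 1 (pd 0 (fun z => v z 2))) x := by
      rw [hw1]; exact pd_pd_sub (c2pd 0 2) (c2pd 2 0) 0 1 x
    have r3z : pd 0 (pd 1 (pd 0 (fun z => v z 2))) x = 0 :=
      hC 2 0 1 0 (by decide) (by decide) (by decide) x hx
    linarith [s2, s3, s6, s7, s8, s9, r2, r2z, r3, r3z]
  · -- second component
    have t2 : pd 2 (pd 2 (fun y => curl3 v y 1)) x
        = pd 2 (pd 2 (pd 2 (fun z => v z 0))) x - pd 2 (pd 2 (pd 0 (fun z => v z 2))) x := by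
      rw [hw1]; exact pd_pd_sub (c2pd 0 2) (c2pd 2 0) 2 2 x
    have t3 : pd 2 (pd 2 (pd 0 (fun z => v z 2))) x
        = pd 0 (pd 2 (pd 2 (fun z => v z 2))) x := by
      rw [comm2 2 2 0]
      exact comm3 2 2 2 0 x
    have t6 := s6a 0
    have t7 : pd 0 (pd 2 dv) x = 0 := htang 0 (by decide)
    have t8 : pd 0 (pd 2 (pd 0 (fun z => v z 0))) x
        = pd 0 (pd 0 (pd 2 (fun z => v z 0))) x := by
      rw [comm2 0 2 0]
    have t9 : pd 0 (pd 2 (pd 1 (fun z => v z 1))) x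
        = pd 1 (pd 0 (pd 2 (fun z => v z 1))) x := by
      rw [comm2 1 2 1]
      exact (comm3 1 2 1 0 x).symm
    have q2 : pd 0 (pd 0 (fun y => curl3 v y 1)) x
        = pd 0 (pd 0 (pd 2 (fun z => v z 0))) x - pd 0 (pd 0 (pd 0 (fun z => v z 2))) x := by
      rw [hw1]; exact pd_pd_sub (c2pd 0 2) (c2pd 2 0) 0 0 x
    have q2z : pd 0 (pd 0 (pd 0 (fun z => v z 2))) x = 0 :=
      hC 2 0 0 0 (by decide) (by decide) (by decide) x hx
    have q3 : pd 1 (pd 0 (fun y => curl3 v y 0)) x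
        = pd 1 (pd 0 (pd 1 (fun z => v z 2))) x - pd 1 (pd 0 (pd 2 (fun z => v z 1))) x := by
      rw [hw0]; exact pd_pd_sub (c2pd 2 1) (c2pd 1 2) 1 0 x
    have q3z : pd 1 (pd 0 (pd 1 (fun z => v z 2))) x = 0 :=
      hC 2 1 0 1 (by decide) (by decide) (by decide) x hx
    linarith [t2, t3, t6, t7, t8, t9, q2, q2z, q3, q3z]

noncomputable def Lmap : (Fin 2 → ℝ) →L[ℝ] (Fin 3 → ℝ) :=
  ContinuousLinearMap.pi ![ContinuousLinearMap.proj 0, ContinuousLinearMap.proj 1, 0]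

lemma Lmap_apply (q : Fin 2 → ℝ) : Lmap q = ![q 0, q 1, 0] := by
  funext i
  fin_cases i <;> simp [Lmap, ContinuousLinearMap.pi_apply]

lemma Lmap_single0 : Lmap (Pi.single (0 : Fin 2) (1:ℝ)) = Pi.single (0 : Fin 3) (1:ℝ) := by
  rw [Lmap_apply]; funext i; fin_cases i <;> simp

lemma Lmap_single1 : Lmap (Pi.single (1 : Fin 2) (1:ℝ)) = Pi.single (1 : Fin 3) (1:ℝ) := by
  rw [Lmap_apply]; funext i; fin_cases i <;> simp

lemma pd_comp_Lmap {g : (Fin 3 → ℝ) → ℝ} {p : Fin 2 → ℝ}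
    (hg : DifferentiableAt ℝ g (Lmap p)) {i : Fin 2} {i' : Fin 3}
    (h : Lmap (Pi.single i (1:ℝ)) = Pi.single i' (1:ℝ)) :
    pd i (fun q => g (Lmap q)) p = pd i' g (Lmap p) := by
  have hc : fderiv ℝ (fun q => g (Lmap q)) p
      = (fderiv ℝ g (Lmap p)).comp (Lmap : (Fin 2 → ℝ) →L[ℝ] (Fin 3 → ℝ)) :=
    (hg.hasFDerivAt.comp p Lmap.hasFDerivAt).fderiv
  simp only [pd, hc, ContinuousLinearMap.coe_comp', Function.comp_apply,
    ContinuousLinearMap.coe_coe, h]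

lemma pd_pd_comp_Lmap {g : (Fin 3 → ℝ) → ℝ} (hg : ContDiff ℝ 2 g) {i i' : Fin 2} {k k' : Fin 3}
    (h : Lmap (Pi.single i (1:ℝ)) = Pi.single k (1:ℝ))
    (h' : Lmap (Pi.single i' (1:ℝ)) = Pi.single k' (1:ℝ))
    (p : Fin 2 → ℝ) :
    pd i (pd i' (fun q => g (Lmap q))) p = pd k (pd k' g) (Lmap p) := by
  have e : pd i' (fun q => g (Lmap q)) = fun q => (pd k' g) (Lmap q) := by
    funext q
    exact pd_comp_Lmap ((hg.differentiable two_ne_zero) (Lmap q)) h'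
  rw [e]
  exact pd_comp_Lmap (((contDiff_pd (m := 1) hg (by norm_num) k').differentiable one_ne_zero)
    (Lmap p)) h

end BVD

open BVD

/-- main theorem, 3D: for a divergence-free velocity field `u` on the upper
half space, `C³` in space and `C¹` in time up to the boundary, obeying the no-slip
condition, and whose vorticity `ω = ∇ ∧ u` satisfies the transport equation
`∂ω/∂t + (u·∇)ω − νΔω − (ω·∇)u − G = 0` in the closed half space, the boundary
vorticity `θ = ω|_{∂D}` satisfies `θ³ = 0` and the dynamical equations
`∂θ¹/∂t − 2νΔ_Γθ¹ + ν∂₁(∇^Γ·θ) − ν(∂³u²/∂𝛎³)|_{∂D} − ψ¹ = 0`,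
`∂θ²/∂t − 2νΔ_Γθ² + ν∂₂(∇^Γ·θ) + ν(∂³u¹/∂𝛎³)|_{∂D} − ψ² = 0` on `∂D = ℝ²`,
where `∂/∂𝛎 = −∂/∂x₃` and `ψ = G|_{∂D}`: the effective viscosity is `2ν`, doubled. -/


theorem boundary_vorticity_dynamics_3d
    (ν : ℝ) (hν : 0 < ν)
    (u : (Fin 3 → ℝ) → ℝ → Fin 3 → ℝ)
    (G : (Fin 3 → ℝ) → ℝ → Fin 3 → ℝ)
    (hu_space : ∀ t : ℝ, 0 ≤ t → ContDiff ℝ 3 (fun x => u x t))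
    (hu_time : ∀ (x : Fin 3 → ℝ) (j : Fin 3),
      ContDiff ℝ 1 (fun t => curl3 (fun z => u z t) x j))
    (hdiv : ∀ x : Fin 3 → ℝ, 0 ≤ x 2 → ∀ t : ℝ, 0 ≤ t →
      ∑ i : Fin 3, pd i (fun y => u y t i) x = 0)
    (hnoslip : ∀ x : Fin 3 → ℝ, x 2 = 0 → ∀ t : ℝ, 0 ≤ t → u x t = 0)
    (htransport : ∀ x : Fin 3 → ℝ, 0 ≤ x 2 → ∀ t : ℝ, 0 ≤ t → ∀ j : Fin 3,
      deriv (fun s => curl3 (fun z => u z s) x j) t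
        + ∑ i : Fin 3, u x t i * pd i (fun y => curl3 (fun z => u z t) y j) x
        - ν * ∑ i : Fin 3, pd i (pd i (fun y => curl3 (fun z => u z t) y j)) x
        - ∑ i : Fin 3, curl3 (fun z => u z t) x i * pd i (fun y => u y t j) x
        - G x t j = 0) :
    ∀ p : Fin 2 → ℝ, ∀ t : ℝ, 0 ≤ t →
      bdryVort u p t 2 = 0 ∧
      deriv (fun s => bdryVort u p s 0) t
        - 2 * ν * (pd 0 (pd 0 (fun q => bdryVort u q t 0)) p
            + pd 1 (pd 1 (fun q => bdryVort u q t 0)) p)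
        + ν * pd 0 (fun q => pd 0 (fun r => bdryVort u r t 0) q
            + pd 1 (fun r => bdryVort u r t 1) q) p
        - ν * (-(pd 2 (pd 2 (pd 2 (fun y => u y t 1))) ![p 0, p 1, 0]))
        - G ![p 0, p 1, 0] t 0 = 0 ∧
      deriv (fun s => bdryVort u p s 1) t
        - 2 * ν * (pd 0 (pd 0 (fun q => bdryVort u q t 1)) p
            + pd 1 (pd 1 (fun q => bdryVort u q t 1)) p)
        + ν * pd 1 (fun q => pd 0 (fun r => bdryVort u r t 0) q
            + pd 1 (fun r => bdryVort u r t 1) q) p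
        + ν * (-(pd 2 (pd 2 (pd 2 (fun y => u y t 0))) ![p 0, p 1, 0]))
        - G ![p 0, p 1, 0] t 1 = 0 := by
  intro p t ht
  have hv : ContDiff ℝ 3 (fun y => u y t) := hu_space t ht
  simp only [bdryVort]
  set x : Fin 3 → ℝ := ![p 0, p 1, 0] with hxdef
  have hx2 : x 2 = 0 := by rw [hxdef]; simp
  have hx0 : 0 ≤ x 2 := le_of_eq hx2.symm
  have hLp : Lmap p = x := by rw [Lmap_apply, ← hxdef]
  have hvj : ∀ j : Fin 3, ContDiff ℝ 3 (fun y => u y t j) := fun j =>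
    (ContinuousLinearMap.proj j : (Fin 3 → ℝ) →L[ℝ] ℝ).contDiff.comp hv
  have hw0f : (fun y => curl3 (fun z => u z t) y 0)
      = fun y => pd 1 (fun z => u z t 2) y - pd 2 (fun z => u z t 1) y := by
    funext y; simp [curl3]
  have hw1f : (fun y => curl3 (fun z => u z t) y 1)
      = fun y => pd 2 (fun z => u z t 0) y - pd 0 (fun z => u z t 2) y := by
    funext y; simp [curl3]
  have hc0 : ContDiff ℝ 2 (fun y => curl3 (fun z => u z t) y 0) := by
    rw [hw0f]
    exact (contDiff_pd (hvj 2) (by norm_num) 1).sub (contDiff_pd (hvj 1) (by norm_num) 2)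
  have hc1 : ContDiff ℝ 2 (fun y => curl3 (fun z => u z t) y 1) := by
    rw [hw1f]
    exact (contDiff_pd (hvj 0) (by norm_num) 2).sub (contDiff_pd (hvj 2) (by norm_num) 0)
  have hu0 : u x t = 0 := hnoslip x hx2 t ht
  have hz : ∀ i : Fin 3, u x t i = 0 := fun i => by rw [hu0]; simp
  have hA : ∀ (j i : Fin 3), i ≠ 2 → pd i (fun y => u y t j) x = 0 := fun j i hi =>
    pd_eq_zero_of_vanish ((hvj j).differentiable (by norm_num) x) hx2
      (fun z hz' => by simp [hnoslip z hz' t ht]) hi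
  have hth3 : curl3 (fun y => u y t) x 2 = 0 := by
    have h1 : pd 0 (fun y => u y t 1) x = 0 := hA 1 0 (by decide)
    have h2 : pd 1 (fun y => u y t 0) x = 0 := hA 0 1 (by decide)
    simp [curl3, h1, h2]
  obtain ⟨hkey0, hkey1⟩ := key_identity (fun y => u y t) hv
    (by intro y hy; simpa [Fin.sum_univ_three] using hdiv y hy t ht)
    (fun y hy => hnoslip y hy t ht) hx2
  have hT0 := htransport x hx0 t ht 0
  have hT1 := htransport x hx0 t ht 1
  simp only [Fin.sum_univ_three, hz, hth3, hA 0 0 (by decide), hA 0 1 (by decide),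
    hA 1 0 (by decide), hA 1 1 (by decide), zero_mul, mul_zero, add_zero, zero_add,
    sub_zero] at hT0 hT1
  -- conversions from boundary (2D) derivatives to interior (3D) derivatives
  have hbv0 : (fun q : Fin 2 → ℝ => curl3 (fun y => u y t) ![q 0, q 1, 0] 0)
      = fun q => (fun y => curl3 (fun z => u z t) y 0) (Lmap q) := by
    funext q; rw [Lmap_apply]
  have hbv1 : (fun q : Fin 2 → ℝ => curl3 (fun y => u y t) ![q 0, q 1, 0] 1)
      = fun q => (fun y => curl3 (fun z => u z t) y 1) (Lmap q) := by
    funext q; rw [Lmap_apply]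
  have c1 : pd 0 (pd 0 (fun q : Fin 2 → ℝ => curl3 (fun y => u y t) ![q 0, q 1, 0] 0)) p
      = pd 0 (pd 0 (fun y => curl3 (fun z => u z t) y 0)) x := by
    rw [hbv0, pd_pd_comp_Lmap hc0 Lmap_single0 Lmap_single0, hLp]
  have c2 : pd 1 (pd 1 (fun q : Fin 2 → ℝ => curl3 (fun y => u y t) ![q 0, q 1, 0] 0)) p
      = pd 1 (pd 1 (fun y => curl3 (fun z => u z t) y 0)) x := by
    rw [hbv0, pd_pd_comp_Lmap hc0 Lmap_single1 Lmap_single1, hLp]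
  have c4 : pd 0 (pd 0 (fun q : Fin 2 → ℝ => curl3 (fun y => u y t) ![q 0, q 1, 0] 1)) p
      = pd 0 (pd 0 (fun y => curl3 (fun z => u z t) y 1)) x := by
    rw [hbv1, pd_pd_comp_Lmap hc1 Lmap_single0 Lmap_single0, hLp]
  have c5 : pd 1 (pd 1 (fun q : Fin 2 → ℝ => curl3 (fun y => u y t) ![q 0, q 1, 0] 1)) p
      = pd 1 (pd 1 (fun y => curl3 (fun z => u z t) y 1)) x := by
    rw [hbv1, pd_pd_comp_Lmap hc1 Lmap_single1 Lmap_single1, hLp]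
  have hmix0 : pd 0 (fun q : Fin 2 → ℝ => curl3 (fun y => u y t) ![q 0, q 1, 0] 0)
      = fun q => pd 0 (fun y => curl3 (fun z => u z t) y 0) (Lmap q) := by
    funext q
    rw [hbv0]
    exact pd_comp_Lmap ((hc0.differentiable two_ne_zero) (Lmap q)) Lmap_single0
  have hmix1 : pd 1 (fun q : Fin 2 → ℝ => curl3 (fun y => u y t) ![q 0, q 1, 0] 1)
      = fun q => pd 1 (fun y => curl3 (fun z => u z t) y 1) (Lmap q) := by
    funext q
    rw [hbv1]
    exact pd_comp_Lmap ((hc1.differentiable two_ne_zero) (Lmap q)) Lmap_single1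
  have hmixsum : (fun q : Fin 2 → ℝ =>
        pd 0 (fun r => curl3 (fun y => u y t) ![r 0, r 1, 0] 0) q
        + pd 1 (fun r => curl3 (fun y => u y t) ![r 0, r 1, 0] 1) q)
      = fun q => (fun y => pd 0 (fun y' => curl3 (fun z => u z t) y' 0) y
          + pd 1 (fun y' => curl3 (fun z => u z t) y' 1) y) (Lmap q) := by
    funext q
    rw [congrFun hmix0 q, congrFun hmix1 q]
  have hd00 : Differentiable ℝ (pd 0 (fun y => curl3 (fun z => u z t) y 0)) :=
    (contDiff_pd (m := 1) hc0 (by norm_num) 0).differentiable one_ne_zero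
  have hd11 : Differentiable ℝ (pd 1 (fun y => curl3 (fun z => u z t) y 1)) :=
    (contDiff_pd (m := 1) hc1 (by norm_num) 1).differentiable one_ne_zero
  have c3 : pd 0 (fun q : Fin 2 → ℝ =>
        pd 0 (fun r => curl3 (fun y => u y t) ![r 0, r 1, 0] 0) q
        + pd 1 (fun r => curl3 (fun y => u y t) ![r 0, r 1, 0] 1) q) p
      = pd 0 (pd 0 (fun y => curl3 (fun z => u z t) y 0)) x
        + pd 0 (pd 1 (fun y => curl3 (fun z => u z t) y 1)) x := by
    rw [hmixsum, pd_comp_Lmap (g := fun y => pd 0 (fun y' => curl3 (fun z => u z t) y' 0) y + pd 1 (fun y' => curl3 (fun z => u z t) y' 1) y) ((hd00 (Lmap p)).add (hd11 (Lmap p))) Lmap_single0, hLp,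
      pd_add (hd00 x) (hd11 x) 0]
  have c6 : pd 1 (fun q : Fin 2 → ℝ =>
        pd 0 (fun r => curl3 (fun y => u y t) ![r 0, r 1, 0] 0) q
        + pd 1 (fun r => curl3 (fun y => u y t) ![r 0, r 1, 0] 1) q) p
      = pd 1 (pd 0 (fun y => curl3 (fun z => u z t) y 0)) x
        + pd 1 (pd 1 (fun y => curl3 (fun z => u z t) y 1)) x := by
    rw [hmixsum, pd_comp_Lmap (g := fun y => pd 0 (fun y' => curl3 (fun z => u z t) y' 0) y + pd 1 (fun y' => curl3 (fun z => u z t) y' 1) y) ((hd00 (Lmap p)).add (hd11 (Lmap p))) Lmap_single1, hLp,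
      pd_add (hd00 x) (hd11 x) 1]
  refine ⟨hth3, ?_, ?_⟩
  · rw [c1, c2, c3]
    linear_combination hT0 + ν * hkey0
  · rw [c4, c5, c6]
    linear_combination hT1 + ν * hkey1
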